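/- Let k be a complex number with Im k > 0, let y_s ∈ ℝ², and let φ : ℝ² → ℂ be bounded and continuous. Then lim_{s → 0⁺} ∫_{ℝ²} k/(2πis) · exp( i k |y − y_s|² / (2s) ) · φ(y) dy = φ(y_s). (The parabolic Green's function acts as an approximate identity as the observation plane approaches the source plane.) -/

import Mathlib

open Complex Real MeasureTheory Filter

local notation "𝕍" => EuclideanSpace ℝ (Fin 2)

-- auxiliary: real gaussian integrable on V
lemma aux_integrable_rexp {b : ℝ} (hb : 0 < b) :
    Integrable (fun v : 𝕍 => Real.exp (-b * ‖v‖ ^ 2)) := by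
  have h := (GaussianFourier.integrable_cexp_neg_mul_sq_norm_add
    (b := (b : ℂ)) (by simpa using hb) 0 ((0 : 𝕍))).norm
  refine h.congr (Filter.Eventually.of_forall fun v => ?_)
  simp [Complex.norm_exp, ← Complex.ofReal_pow]

lemma aux_re (k : ℂ) (r : ℝ) :
    (Complex.I * k * (r : ℂ) ^ 2 / 2).re = -(k.im / 2) * r ^ 2 := by
  rw [show ((2 : ℂ)) = ((2 : ℝ) : ℂ) by norm_num, Complex.div_ofReal_re,
    ← Complex.ofReal_pow]
  simp [Complex.mul_re, Complex.mul_im, ← Complex.ofReal_pow]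
  ring

theorem parabolic_green_approximate_identity
    (k : ℂ) (hk : 0 < k.im)
    (ys : EuclideanSpace ℝ (Fin 2))
    (φ : EuclideanSpace ℝ (Fin 2) → ℂ)
    (hφc : Continuous φ) (hφb : ∃ C : ℝ, ∀ y, ‖φ y‖ ≤ C) :
    Filter.Tendsto
      (fun s : ℝ =>
        ∫ y : EuclideanSpace ℝ (Fin 2),
          k / (2 * Real.pi * Complex.I * s) *
            Complex.exp (Complex.I * k * (‖y - ys‖ : ℂ) ^ 2 / (2 * s)) * φ y)
      (nhdsWithin 0 (Set.Ioi 0)) (nhds (φ ys)) := by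
  obtain ⟨C, hC⟩ := hφb
  have hC0 : 0 ≤ C := le_trans (norm_nonneg _) (hC ys)
  have hk0 : k ≠ 0 := fun h => by simp [h] at hk
  have hπ : (Real.pi : ℂ) ≠ 0 := by
    exact_mod_cast Real.pi_ne_zero
  set H : ℝ → 𝕍 → ℂ := fun s x =>
    k / (2 * Real.pi * Complex.I) * Complex.exp (Complex.I * k * (‖x‖ : ℂ) ^ 2 / 2) *
      φ (Real.sqrt s • x + ys) with hH
  -- continuity of H s
  have hHcont : ∀ s : ℝ, Continuous (H s) := by
    intro s
    apply Continuous.mul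
    · apply continuous_const.mul
      apply Complex.continuous_exp.comp
      exact ((continuous_const.mul ((Complex.continuous_ofReal.comp continuous_norm).pow 2)).div_const 2)
    · exact hφc.comp ((continuous_id.const_smul (Real.sqrt s)).add continuous_const)
  -- key change of variables
  have key : ∀ s ∈ Set.Ioi (0:ℝ),
      (∫ y : 𝕍, k / (2 * Real.pi * Complex.I * s) *
            Complex.exp (Complex.I * k * (‖y - ys‖ : ℂ) ^ 2 / (2 * s)) * φ y)
        = ∫ x : 𝕍, H s x := by
    intro s hs
    rw [Set.mem_Ioi] at hs
    have hsne : (s : ℂ) ≠ 0 := by exact_mod_cast hs.ne'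
    have h1 : (∫ y : 𝕍, k / (2 * Real.pi * Complex.I * s) *
            Complex.exp (Complex.I * k * (‖y - ys‖ : ℂ) ^ 2 / (2 * s)) * φ y)
        = ∫ y : 𝕍, k / (2 * Real.pi * Complex.I * s) *
            Complex.exp (Complex.I * k * (‖y‖ : ℂ) ^ 2 / (2 * s)) * φ (y + ys) := by
      rw [← integral_add_right_eq_self (fun y : 𝕍 => k / (2 * Real.pi * Complex.I * s) *
            Complex.exp (Complex.I * k * (‖y - ys‖ : ℂ) ^ 2 / (2 * s)) * φ y) ys]
      simp [add_sub_cancel_right]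
    rw [h1]
    set g : 𝕍 → ℂ := fun y => k / (2 * Real.pi * Complex.I * s) *
            Complex.exp (Complex.I * k * (‖y‖ : ℂ) ^ 2 / (2 * s)) * φ (y + ys) with hg
    have hcomp := MeasureTheory.Measure.integral_comp_smul (volume : Measure 𝕍) g (Real.sqrt s)
    rw [finrank_euclideanSpace_fin] at hcomp
    have hsq : Real.sqrt s ^ 2 = s := Real.sq_sqrt hs.le
    rw [hsq, _root_.abs_of_nonneg (by positivity)] at hcomp
    have h2 : (∫ y : 𝕍, g y) = s • ∫ x : 𝕍, g (Real.sqrt s • x) := by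
      rw [hcomp, smul_smul, mul_inv_cancel₀ hs.ne', one_smul]
    rw [h2, ← integral_smul]
    congr 1
    funext x
    have hnorm : ‖Real.sqrt s • x‖ = Real.sqrt s * ‖x‖ := by
      rw [norm_smul, Real.norm_eq_abs, _root_.abs_of_nonneg (Real.sqrt_nonneg s)]
    have hexp : Complex.I * k * ((‖Real.sqrt s • x‖ : ℝ) : ℂ) ^ 2 / (2 * s)
        = Complex.I * k * (‖x‖ : ℂ) ^ 2 / 2 := by
      rw [hnorm]
      push_cast
      rw [mul_pow]
      rw [show ((Real.sqrt s : ℝ) : ℂ) ^ 2 = (s : ℂ) by exact_mod_cast congrArg Complex.ofReal hsq]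
      field_simp
    simp only [hg, hH, hexp]
    rw [Complex.real_smul]
    field_simp
  -- the limit integrand
  have h0 : ∀ x : 𝕍, H 0 x = k / (2 * Real.pi * Complex.I) *
      Complex.exp (Complex.I * k * (‖x‖ : ℂ) ^ 2 / 2) * φ ys := by
    intro x
    simp [hH]
  -- gaussian integral value
  have hgauss : (∫ x : 𝕍, H 0 x) = φ ys := by
    simp only [h0]
    rw [integral_mul_const, integral_const_mul]
    set b : ℂ := -(Complex.I * k / 2) with hb
    have hbre : 0 < b.re := by
      have : b.re = k.im / 2 := by
        rw [hb, show ((2:ℂ)) = ((2:ℝ):ℂ) by norm_num]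
        rw [Complex.neg_re, Complex.div_ofReal_re]
        simp [Complex.mul_re]
        ring
      rw [this]; linarith
    have hrw : ∀ x : 𝕍, Complex.exp (Complex.I * k * (‖x‖ : ℂ) ^ 2 / 2)
        = Complex.exp (-b * (‖x‖ : ℂ) ^ 2) := by
      intro x; congr 1; rw [hb]; ring
    rw [show (∫ x : 𝕍, Complex.exp (Complex.I * k * (‖x‖ : ℂ) ^ 2 / 2))
        = ∫ x : 𝕍, Complex.exp (-b * (‖x‖ : ℂ) ^ 2) from by simp_rw [hrw]]
    rw [GaussianFourier.integral_cexp_neg_mul_sq_norm hbre]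
    rw [finrank_euclideanSpace_fin]
    norm_num
    rw [hb]
    have hI : Complex.I ≠ 0 := Complex.I_ne_zero
    field_simp
    ring_nf
    rw [Complex.I_sq]
    ring
  -- dominated convergence
  have hlim : Tendsto (fun s => ∫ x : 𝕍, H s x) (nhdsWithin 0 (Set.Ioi 0))
      (nhds (∫ x : 𝕍, H 0 x)) := by
    apply tendsto_integral_filter_of_dominated_convergence
      (fun x : 𝕍 => ‖k / (2 * Real.pi * Complex.I)‖ * Real.exp (-(k.im / 2) * ‖x‖ ^ 2) * C)
    · exact Filter.Eventually.of_forall fun s => (hHcont s).aestronglyMeasurable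
    · refine Filter.Eventually.of_forall fun s => Filter.Eventually.of_forall fun x => ?_
      simp only [hH]
      rw [norm_mul, norm_mul, Complex.norm_exp, aux_re]
      exact mul_le_mul_of_nonneg_left (hC _) (by positivity)
    · exact ((aux_integrable_rexp (by linarith : (0:ℝ) < k.im / 2)).const_mul _).mul_const _
    · refine Filter.Eventually.of_forall fun x => ?_
      simp only [hH]
      apply Tendsto.mul
      · exact tendsto_const_nhds
      · have h1 : Tendsto (fun s : ℝ => Real.sqrt s • x + ys) (nhdsWithin 0 (Set.Ioi 0))
            (nhds ys) := by
          have : Tendsto (fun s : ℝ => Real.sqrt s • x + ys) (nhds 0) (nhds (Real.sqrt 0 • x + ys)) :=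
            ((Real.continuous_sqrt.smul continuous_const).add continuous_const).tendsto 0
          simpa using this.mono_left nhdsWithin_le_nhds
        have := (hφc.tendsto ys).comp h1
        simpa [Function.comp_def] using this
  rw [← hgauss]
  exact Filter.Tendsto.congr' ((Filter.eventuallyEq_of_mem self_mem_nhdsWithin key).symm) hlim
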